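/- Let (X_j, Y_j, Z_j), j = 1, ..., n, be i.i.d. triples of random variables with finite alphabets, each distributed according to a pmf p(x,y,z) satisfying the Markov chain Y - X - Z (Y and Z conditionally independent given X). Let T_1 = f_1(Y^n) and T_3 = f_3(X^n, T_1) for deterministic functions f_1 and f_3. Then for every 1 ≤ i ≤ n, the Markov chain Z_i - (T_1, T_3, X^i, Z_{i+1}^n) - X_{i+1}^n holds, i.e., Z_i and X_{i+1}^n are conditionally independent given (T_1, T_3, X^i, Z_{i+1}^n). -/

import Mathlib

open scoped Classical
open Finset

section AuxLemmas

private lemma ptwise {α γ : Type*} [Fintype α] [Fintype γ]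
    (p : Prop) [Decidable p] (va : α) (vc : γ) (x : ℝ) :
    (∑ c : γ, ∑ a : α, if va = a ∧ p ∧ vc = c then x else 0) = if p then x else 0 := by
  by_cases hp : p <;> simp [hp, ite_and, Finset.sum_ite_eq]

private lemma ptwise2 {γ : Type*} [Fintype γ]
    (p1 p2 : Prop) [Decidable p1] [Decidable p2] (vc : γ) (x : ℝ) :
    (∑ c : γ, if p1 ∧ p2 ∧ vc = c then x else 0) = if p1 ∧ p2 then x else 0 := by
  by_cases h1 : p1 <;> by_cases h2 : p2 <;> simp [h1, h2, ite_and, Finset.sum_ite_eq]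

private lemma ptwise3 {α : Type*} [Fintype α]
    (p1 p2 : Prop) [Decidable p1] [Decidable p2] (va : α) (x : ℝ) :
    (∑ a : α, if va = a ∧ p1 ∧ p2 then x else 0) = if p1 ∧ p2 then x else 0 := by
  by_cases h1 : p1 <;> by_cases h2 : p2 <;> simp [h1, h2, ite_and, Finset.sum_ite_eq]

private lemma key1 {Ω α β γ : Type*} [Fintype Ω] [Fintype α] [Fintype γ]
    (P : Ω → ℝ) (A : Ω → α) (B : Ω → β) (C : Ω → γ) (b : β) :
    (∑ ω, if B ω = b then P ω else 0)
      = ∑ a : α, ∑ c : γ, ∑ ω, if A ω = a ∧ B ω = b ∧ C ω = c then P ω else 0 := by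
  rw [Finset.sum_comm]
  have h1 : ∀ c : γ, (∑ a : α, ∑ ω, if A ω = a ∧ B ω = b ∧ C ω = c then P ω else 0)
      = ∑ ω, ∑ a : α, if A ω = a ∧ B ω = b ∧ C ω = c then P ω else 0 :=
    fun c => Finset.sum_comm
  simp_rw [h1]
  rw [Finset.sum_comm]
  refine Finset.sum_congr rfl fun ω _ => (ptwise (B ω = b) (A ω) (C ω) (P ω)).symm

private lemma key2 {Ω α β γ : Type*} [Fintype Ω] [Fintype γ]
    (P : Ω → ℝ) (A : Ω → α) (B : Ω → β) (C : Ω → γ) (a : α) (b : β) :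
    (∑ ω, if A ω = a ∧ B ω = b then P ω else 0)
      = ∑ c : γ, ∑ ω, if A ω = a ∧ B ω = b ∧ C ω = c then P ω else 0 := by
  rw [Finset.sum_comm]
  refine Finset.sum_congr rfl fun ω _ => ?_
  have := ptwise2 (A ω = a) (B ω = b) (C ω) (P ω)
  exact this.symm

private lemma key3 {Ω α β γ : Type*} [Fintype Ω] [Fintype α]
    (P : Ω → ℝ) (A : Ω → α) (B : Ω → β) (C : Ω → γ) (b : β) (c : γ) :
    (∑ ω, if B ω = b ∧ C ω = c then P ω else 0)
      = ∑ a : α, ∑ ω, if A ω = a ∧ B ω = b ∧ C ω = c then P ω else 0 := by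
  rw [Finset.sum_comm]
  refine Finset.sum_congr rfl fun ω _ => (ptwise3 (B ω = b) (C ω = c) (A ω) (P ω)).symm

private lemma ite_iff {p q' : Prop} {ip : Decidable p} {iq : Decidable q'}
    (h : p ↔ q') (x y : ℝ) : (@ite _ p ip x y) = @ite _ q' iq x y := by
  have hpq : p = q' := propext h
  subst hpq
  exact congrArg (fun d => @ite ℝ p d x y) (Subsingleton.elim ip iq)

private lemma sum_if_const {ι : Type*} [Fintype ι] (c : Prop) [Decidable c] (f : ι → ℝ) :
    (∑ t, if c then f t else 0) = if c then ∑ t, f t else 0 := by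
  split_ifs <;> simp

private lemma sum_triple {X Y Z : Type*} [Fintype X] [Fintype Y] [Fintype Z]
    (g : X × Y × Z → ℝ) :
    ∑ ω : X × Y × Z, g ω = ∑ x, ∑ y, ∑ z, g (x, y, z) := by
  rw [Fintype.sum_prod_type]
  exact Finset.sum_congr rfl fun x _ => Fintype.sum_prod_type _

private lemma ite_dec_norm {α : Sort*} (c : Prop) [i : Decidable c] (a b : α) :
    @ite α c i a b = @ite α c (Classical.propDecidable c) a b := by
  congr

private lemma ite_and_cl {α : Sort*} (P Q : Prop) [i : Decidable (P ∧ Q)] (a b : α) :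
    @ite α (P ∧ Q) i a b = if P then (if Q then a else b) else b := by
  by_cases hP : P <;> by_cases hQ : Q <;> simp [hP, hQ]

private lemma marg_xyz {𝒳 𝒴 𝒵 : Type*} [Fintype 𝒳] [Fintype 𝒴] [Fintype 𝒵]
    (q : 𝒳 × 𝒴 × 𝒵 → ℝ) (x : 𝒳) (y : 𝒴) (z : 𝒵) :
    (∑ w : 𝒳 × 𝒴 × 𝒵, if w.2.1 = y ∧ w.1 = x ∧ w.2.2 = z then q w else 0) = q (x, y, z) := by
  rw [sum_triple]
  dsimp only
  simp only [ite_and_cl, ite_dec_norm]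
  simp only [ite_and, sum_if_const, Finset.sum_ite_eq', Finset.mem_univ, if_true]

private lemma marg_x {𝒳 𝒴 𝒵 : Type*} [Fintype 𝒳] [Fintype 𝒴] [Fintype 𝒵]
    (q : 𝒳 × 𝒴 × 𝒵 → ℝ) (x : 𝒳) :
    (∑ w : 𝒳 × 𝒴 × 𝒵, if w.1 = x then q w else 0) = ∑ y', ∑ z', q (x, y', z') := by
  rw [sum_triple]
  dsimp only
  simp only [ite_dec_norm]
  simp only [sum_if_const, Finset.sum_ite_eq', Finset.mem_univ, if_true]

private lemma marg_xy {𝒳 𝒴 𝒵 : Type*} [Fintype 𝒳] [Fintype 𝒴] [Fintype 𝒵]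
    (q : 𝒳 × 𝒴 × 𝒵 → ℝ) (x : 𝒳) (y : 𝒴) :
    (∑ w : 𝒳 × 𝒴 × 𝒵, if w.2.1 = y ∧ w.1 = x then q w else 0) = ∑ v, q (x, y, v) := by
  rw [sum_triple]
  dsimp only
  simp only [ite_and_cl, ite_dec_norm]
  simp only [ite_and, sum_if_const, Finset.sum_ite_eq', Finset.mem_univ, if_true]

private lemma marg_xz {𝒳 𝒴 𝒵 : Type*} [Fintype 𝒳] [Fintype 𝒴] [Fintype 𝒵]
    (q : 𝒳 × 𝒴 × 𝒵 → ℝ) (x : 𝒳) (z : 𝒵) :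
    (∑ w : 𝒳 × 𝒴 × 𝒵, if w.1 = x ∧ w.2.2 = z then q w else 0) = ∑ y', q (x, y', z) := by
  rw [sum_triple]
  dsimp only
  simp only [ite_and_cl, ite_dec_norm]
  simp only [ite_and, sum_if_const, Finset.sum_ite_eq', Finset.mem_univ, if_true]

private lemma sum_split {𝒵 : Type*} [Fintype 𝒵] {n : ℕ} (i : Fin n) (a : 𝒵)
    (f : (Fin n → 𝒵) → ℝ) :
    (∑ v : 𝒵, ∑ z : Fin n → 𝒵, if z i = a then f (Function.update z i v) else 0)
      = ∑ z, f z := by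
  have h0 : (∑ v : 𝒵, ∑ z : Fin n → 𝒵, if z i = a then f (Function.update z i v) else 0)
      = ∑ p : 𝒵 × (Fin n → 𝒵), if p.2 i = a then f (Function.update p.2 i p.1) else 0 :=
    by exact (Fintype.sum_prod_type
      (f := fun p : 𝒵 × (Fin n → 𝒵) => if p.2 i = a then f (Function.update p.2 i p.1) else 0)).symm
  rw [h0, show (∑ p : 𝒵 × (Fin n → 𝒵), if p.2 i = a then f (Function.update p.2 i p.1) else 0)
      = ∑ p ∈ Finset.univ.filter (fun p : 𝒵 × (Fin n → 𝒵) => p.2 i = a),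
          f (Function.update p.2 i p.1) from (Finset.sum_filter _ _).symm]
  refine Finset.sum_nbij' (fun p => Function.update p.2 i p.1)
    (fun z => (z i, Function.update z i a)) ?_ ?_ ?_ ?_ ?_
  · intro p hp; exact Finset.mem_univ _
  · intro z hz
    simp [Function.update_self]
  · intro p hp
    simp only [Finset.mem_filter] at hp
    ext j
    · simp [Function.update_self]
    · show Function.update (Function.update p.2 i p.1) i a j = p.2 j
      rcases eq_or_ne j i with rfl | hj
      · simp [hp.2]
      · simp [Function.update_of_ne hj]
  · intro z hz
    simp only [Function.update_idem, Function.update_eq_self]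
  · intro p hp; rfl

private lemma inner_z_a {𝒳 𝒴 𝒵 : Type*} [Fintype 𝒵] {n : ℕ}
    (q : 𝒳 × 𝒴 × 𝒵 → ℝ) (i : Fin n) (x : Fin n → 𝒳) (y : Fin n → 𝒴)
    (E : (Fin n → 𝒵) → Prop) (a : 𝒵) :
    (∑ z, if E z ∧ z i = a then ∏ j, q (x j, y j, z j) else 0)
      = q (x i, y i, a) *
        ∑ z, if E z ∧ z i = a then ∏ j ∈ Finset.univ.erase i, q (x j, y j, z j) else 0 := by
  rw [Finset.mul_sum]
  refine Finset.sum_congr rfl fun z _ => ?_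
  split_ifs with h
  · rw [← Finset.mul_prod_erase _ _ (Finset.mem_univ i), h.2]
  · rw [mul_zero]

private lemma inner_z {𝒳 𝒴 𝒵 : Type*} [Fintype 𝒵] {n : ℕ}
    (q : 𝒳 × 𝒴 × 𝒵 → ℝ) (i : Fin n) (x : Fin n → 𝒳) (y : Fin n → 𝒴)
    (E : (Fin n → 𝒵) → Prop) (hE : ∀ z v, E (Function.update z i v) ↔ E z) (a : 𝒵) :
    (∑ z, if E z then ∏ j, q (x j, y j, z j) else 0)
      = (∑ v, q (x i, y i, v)) *
        ∑ z, if E z ∧ z i = a then ∏ j ∈ Finset.univ.erase i, q (x j, y j, z j) else 0 := by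
  have h1 : ∀ v : 𝒵,
      (∑ z : Fin n → 𝒵, if z i = a then
          (if E (Function.update z i v) then ∏ j, q (x j, y j, Function.update z i v j) else 0)
        else 0)
      = q (x i, y i, v) *
        ∑ z, if E z ∧ z i = a then ∏ j ∈ Finset.univ.erase i, q (x j, y j, z j) else 0 := by
    intro v
    rw [Finset.mul_sum]
    refine Finset.sum_congr rfl fun z _ => ?_
    by_cases hzi : z i = a
    · rw [if_pos hzi]
      have hprod : (∏ j, q (x j, y j, Function.update z i v j))
          = q (x i, y i, v) * ∏ j ∈ Finset.univ.erase i, q (x j, y j, z j) := by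
        rw [← Finset.mul_prod_erase _ _ (Finset.mem_univ i), Function.update_self]
        congr 1
        refine Finset.prod_congr rfl fun j hj => ?_
        rw [Function.update_of_ne (Finset.mem_erase.1 hj).1]
      rw [hprod]
      by_cases hEz : E z
      · rw [if_pos ((hE z v).2 hEz), if_pos ⟨hEz, hzi⟩]
      · rw [if_neg (fun h => hEz ((hE z v).1 h)), if_neg (fun h => hEz h.1), mul_zero]
    · rw [if_neg hzi, if_neg (fun h => hzi h.2), mul_zero]
  calc (∑ z, if E z then ∏ j, q (x j, y j, z j) else 0)
      = ∑ v : 𝒵, ∑ z : Fin n → 𝒵, if z i = a then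
          (if E (Function.update z i v) then ∏ j, q (x j, y j, Function.update z i v j) else 0)
        else 0 := (sum_split i a _).symm
    _ = ∑ v : 𝒵, q (x i, y i, v) *
          ∑ z, if E z ∧ z i = a then ∏ j ∈ Finset.univ.erase i, q (x j, y j, z j) else 0 :=
        Finset.sum_congr rfl fun v _ => h1 v
    _ = _ := by rw [← Finset.sum_mul]

private lemma F1 {𝒳 𝒴 𝒵 : Type*} [Fintype 𝒳] [Fintype 𝒴] [Fintype 𝒵] {n : ℕ}
    (q : 𝒳 × 𝒴 × 𝒵 → ℝ)
    (hM : ∀ x y z, q (x, y, z) * (∑ y', ∑ z', q (x, y', z'))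
        = (∑ v, q (x, y, v)) * (∑ y', q (x, y', z)))
    (i : Fin n) (a : 𝒵)
    (D : (Fin n → 𝒳) → (Fin n → 𝒴) → Prop) (E : (Fin n → 𝒵) → Prop)
    (hE : ∀ z v, E (Function.update z i v) ↔ E z)
    (xb : 𝒳) (hD : ∀ x y, D x y → x i = xb) :
    (∑ y', ∑ z', q (xb, y', z')) *
      (∑ x, ∑ y, if D x y then (∑ z, if E z ∧ z i = a then ∏ j, q (x j, y j, z j) else 0) else 0)
    = (∑ y', q (xb, y', a)) *
      (∑ x, ∑ y, if D x y then (∑ z, if E z then ∏ j, q (x j, y j, z j) else 0) else 0) := by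
  rw [Finset.mul_sum, Finset.mul_sum]
  refine Finset.sum_congr rfl fun x _ => ?_
  rw [Finset.mul_sum, Finset.mul_sum]
  refine Finset.sum_congr rfl fun y _ => ?_
  by_cases hxy : D x y
  · rw [if_pos hxy, if_pos hxy, ← hD x y hxy]
    rw [inner_z_a q i x y E a, inner_z q i x y E hE a]
    set M := ∑ z, if E z ∧ z i = a then ∏ j ∈ Finset.univ.erase i, q (x j, y j, z j) else 0
    calc (∑ y', ∑ z', q (x i, y', z')) * (q (x i, y i, a) * M)
        = (q (x i, y i, a) * (∑ y', ∑ z', q (x i, y', z'))) * M := by ring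
      _ = ((∑ v, q (x i, y i, v)) * (∑ y', q (x i, y', a))) * M := by rw [hM]
      _ = (∑ y', q (x i, y', a)) * ((∑ v, q (x i, y i, v)) * M) := by ring
  · rw [if_neg hxy, if_neg hxy, mul_zero, mul_zero]

end AuxLemmas

/-- Conditional independence of `A` and `C` given `B` for a pmf `P` on a finite sample
space, in cross-multiplication form: `P(A=a,B=b,C=c) P(B=b) = P(A=a,B=b) P(B=b,C=c)`. -/
def CondIndepPmf {Ω α β γ : Type*} [Fintype Ω]
    (P : Ω → ℝ) (A : Ω → α) (B : Ω → β) (C : Ω → γ) : Prop :=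
  ∀ (a : α) (b : β) (c : γ),
    (∑ ω, if A ω = a ∧ B ω = b ∧ C ω = c then P ω else 0) *
      (∑ ω, if B ω = b then P ω else 0) =
    (∑ ω, if A ω = a ∧ B ω = b then P ω else 0) *
      (∑ ω, if B ω = b ∧ C ω = c then P ω else 0)

private lemma condIndepPmf_of_factor {Ω α β γ : Type*} [Fintype Ω] [Fintype α] [Fintype γ]
    (P : Ω → ℝ) (A : Ω → α) (B : Ω → β) (C : Ω → γ)
    (φ : α → β → ℝ) (ψ : β → γ → ℝ)
    (h : ∀ a b c, (∑ ω, if A ω = a ∧ B ω = b ∧ C ω = c then P ω else 0) = φ a b * ψ b c) :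
    CondIndepPmf P A B C := by
  intro a b c
  have hB : (∑ ω, if B ω = b then P ω else 0) = (∑ a', φ a' b) * (∑ c', ψ b c') := by
    rw [key1 P A B C b]
    simp_rw [h]
    simp_rw [← Finset.mul_sum, ← Finset.sum_mul]
  have hAB : (∑ ω, if A ω = a ∧ B ω = b then P ω else 0) = φ a b * (∑ c', ψ b c') := by
    rw [key2 P A B C a b]
    simp_rw [h, ← Finset.mul_sum]
  have hBC : (∑ ω, if B ω = b ∧ C ω = c then P ω else 0) = (∑ a', φ a' b) * ψ b c := by
    rw [key3 P A B C b c]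
    simp_rw [h, ← Finset.sum_mul]
  rw [h, hB, hAB, hBC]
  ring

/-- For i.i.d. triples `(X_j,Y_j,Z_j) ~ q` with the single-letter Markov chain `Y - X - Z`, `T₁ = f₁(Yⁿ)` and `T₃ = f₃(Xⁿ, T₁)`, the Markov chain `Z_i - (T₁, T₃, X^i, Z_{i+1}ⁿ) - X_{i+1}ⁿ` holds. -/
theorem markov_stmt15
    {𝒳 𝒴 𝒵 : Type*} [Fintype 𝒳] [Fintype 𝒴] [Fintype 𝒵] {n : ℕ}
    (q : 𝒳 × 𝒴 × 𝒵 → ℝ) (hq0 : ∀ a, 0 ≤ q a) (hq1 : ∑ a, q a = 1)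
    (hMarkov : CondIndepPmf q (fun a => a.2.1) (fun a => a.1) (fun a => a.2.2))
    {τ₁ τ₃ : Type*}
    (f1 : (Fin n → 𝒴) → τ₁) (f3 : (Fin n → 𝒳) → τ₁ → τ₃)
    (i : Fin n) :
    CondIndepPmf
      (fun ω : (Fin n → 𝒳) × (Fin n → 𝒴) × (Fin n → 𝒵) =>
        ∏ j, q (ω.1 j, ω.2.1 j, ω.2.2 j))
      (fun ω => ω.2.2 i)
      (fun ω => (f1 ω.2.1, f3 ω.1 (f1 ω.2.1), (fun j : {j : Fin n // j ≤ i} => ω.1 j), (fun j : {j : Fin n // i < j} => ω.2.2 j)))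
      (fun ω => (fun j : {j : Fin n // i < j} => ω.1 j)) := by
  have hM : ∀ x y z, q (x, y, z) * (∑ y', ∑ z', q (x, y', z'))
      = (∑ v, q (x, y, v)) * (∑ y', q (x, y', z)) := by
    intro x y z
    have h := hMarkov y x z
    rw [marg_xyz, marg_x, marg_xy, marg_xz] at h
    exact h
  have hq0' : ∀ x y z, (∑ y', ∑ z', q (x, y', z')) = 0 → q (x, y, z) = 0 := by
    intro x y z h
    have h1 : (∑ z', q (x, y, z')) = 0 :=
      (Finset.sum_eq_zero_iff_of_nonneg
        (fun t _ => Finset.sum_nonneg fun s _ => hq0 _)).1 h y (Finset.mem_univ _)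
    exact (Finset.sum_eq_zero_iff_of_nonneg fun t _ => hq0 _).1 h1 z (Finset.mem_univ _)
  refine condIndepPmf_of_factor _ _ _ _
    (fun a b => ∑ y', q (b.2.2.1 ⟨i, le_refl i⟩, y', a))
    (fun b c => if (∑ y', ∑ z', q (b.2.2.1 ⟨i, le_refl i⟩, y', z')) = 0 then 0
      else (∑ ω : (Fin n → 𝒳) × (Fin n → 𝒴) × (Fin n → 𝒵),
          if (f1 ω.2.1, f3 ω.1 (f1 ω.2.1), (fun j : {j : Fin n // j ≤ i} => ω.1 j),
              (fun j : {j : Fin n // i < j} => ω.2.2 j)) = b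
              ∧ (fun j : {j : Fin n // i < j} => ω.1 j) = c
            then ∏ j, q (ω.1 j, ω.2.1 j, ω.2.2 j) else 0)
        / (∑ y', ∑ z', q (b.2.2.1 ⟨i, le_refl i⟩, y', z')))
    ?_
  intro a b c
  obtain ⟨t1, t3, xle, zgt⟩ := b
  dsimp only
  set xb : 𝒳 := xle ⟨i, le_refl i⟩ with hxb
  obtain ⟨D, hD_def⟩ : ∃ D' : (Fin n → 𝒳) → (Fin n → 𝒴) → Prop, D' = fun x y =>
      f1 y = t1 ∧ f3 x (f1 y) = t3 ∧ (fun j : {j : Fin n // j ≤ i} => x j) = xle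
        ∧ (fun j : {j : Fin n // i < j} => x j) = c := ⟨_, rfl⟩
  obtain ⟨E, hE_def⟩ : ∃ E' : (Fin n → 𝒵) → Prop, E' = fun z =>
      (fun j : {j : Fin n // i < j} => z j) = zgt := ⟨_, rfl⟩
  have hD : ∀ x y, D x y → x i = xb := by
    intro x y hxy
    simp only [hD_def] at hxy
    exact congrFun hxy.2.2.1 ⟨i, le_refl i⟩
  have hE : ∀ z v, E (Function.update z i v) ↔ E z := by
    intro z v
    have h2 : (fun j : {j : Fin n // i < j} => Function.update z i v j)
        = fun j : {j : Fin n // i < j} => z j :=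
      funext fun j => Function.update_of_ne j.2.ne' _ _
    rw [hE_def]
    dsimp only
    rw [h2]
  have hS : (∑ ω : (Fin n → 𝒳) × (Fin n → 𝒴) × (Fin n → 𝒵),
        if ω.2.2 i = a ∧ (f1 ω.2.1, f3 ω.1 (f1 ω.2.1), (fun j : {j : Fin n // j ≤ i} => ω.1 j),
            (fun j : {j : Fin n // i < j} => ω.2.2 j)) = (t1, t3, xle, zgt)
            ∧ (fun j : {j : Fin n // i < j} => ω.1 j) = c
          then ∏ j, q (ω.1 j, ω.2.1 j, ω.2.2 j) else 0)
      = ∑ x, ∑ y, if D x y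
          then (∑ z, if E z ∧ z i = a then ∏ j, q (x j, y j, z j) else 0) else 0 := by
    rw [sum_triple]
    refine Finset.sum_congr rfl fun x _ => Finset.sum_congr rfl fun y _ => ?_
    by_cases hxy : D x y
    · rw [if_pos hxy]
      refine Finset.sum_congr rfl fun z _ => if_congr ?_ rfl rfl
      rw [hD_def] at hxy
      have h1 : f1 y = t1 := hxy.1
      have h2 : f3 x (f1 y) = t3 := hxy.2.1
      have h3 : (fun j : {j : Fin n // j ≤ i} => x j) = xle := hxy.2.2.1
      have h4 : (fun j : {j : Fin n // i < j} => x j) = c := hxy.2.2.2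
      constructor
      · intro hcon
        refine ⟨?_, hcon.1⟩
        rw [hE_def]
        exact congrArg (fun p => p.2.2.2) hcon.2.1
      · intro hcon
        have hez : (fun j : {j : Fin n // i < j} => z j) = zgt := by
          have := hcon.1; rwa [hE_def] at this
        exact ⟨hcon.2, by rw [h2, h1, h3, hez], h4⟩
    · rw [if_neg hxy]
      refine Finset.sum_eq_zero fun z _ => ?_
      rw [if_neg]
      intro hcon
      refine hxy ?_
      rw [hD_def]
      exact ⟨congrArg (fun p => p.1) hcon.2.1, congrArg (fun p => p.2.1) hcon.2.1,
        congrArg (fun p => p.2.2.1) hcon.2.1, hcon.2.2⟩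
  have hT : (∑ ω : (Fin n → 𝒳) × (Fin n → 𝒴) × (Fin n → 𝒵),
        if (f1 ω.2.1, f3 ω.1 (f1 ω.2.1), (fun j : {j : Fin n // j ≤ i} => ω.1 j),
            (fun j : {j : Fin n // i < j} => ω.2.2 j)) = (t1, t3, xle, zgt)
            ∧ (fun j : {j : Fin n // i < j} => ω.1 j) = c
          then ∏ j, q (ω.1 j, ω.2.1 j, ω.2.2 j) else 0)
      = ∑ x, ∑ y, if D x y
          then (∑ z, if E z then ∏ j, q (x j, y j, z j) else 0) else 0 := by
    rw [sum_triple]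
    refine Finset.sum_congr rfl fun x _ => Finset.sum_congr rfl fun y _ => ?_
    by_cases hxy : D x y
    · rw [if_pos hxy]
      refine Finset.sum_congr rfl fun z _ => if_congr ?_ rfl rfl
      rw [hD_def] at hxy
      have h1 : f1 y = t1 := hxy.1
      have h2 : f3 x (f1 y) = t3 := hxy.2.1
      have h3 : (fun j : {j : Fin n // j ≤ i} => x j) = xle := hxy.2.2.1
      have h4 : (fun j : {j : Fin n // i < j} => x j) = c := hxy.2.2.2
      constructor
      · intro hcon
        rw [hE_def]
        exact congrArg (fun p => p.2.2.2) hcon.1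
      · intro hcon
        have hez : (fun j : {j : Fin n // i < j} => z j) = zgt := by
          rwa [hE_def] at hcon
        exact ⟨by rw [h2, h1, h3, hez], h4⟩
    · rw [if_neg hxy]
      refine Finset.sum_eq_zero fun z _ => ?_
      rw [if_neg]
      intro hcon
      refine hxy ?_
      rw [hD_def]
      exact ⟨congrArg (fun p => p.1) hcon.1, congrArg (fun p => p.2.1) hcon.1,
        congrArg (fun p => p.2.2.1) hcon.1, hcon.2⟩
  refine Eq.trans (Finset.sum_congr rfl fun ω _ => ite_iff Iff.rfl _ _) (hS.trans ?_)
  by_cases hQ : (∑ y', ∑ z', q (xb, y', z')) = 0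
  · rw [if_pos hQ, mul_zero]
    refine Finset.sum_eq_zero fun x _ => Finset.sum_eq_zero fun y _ => ?_
    by_cases hxy : D x y
    · rw [if_pos hxy]
      refine Finset.sum_eq_zero fun z _ => ?_
      split_ifs with hc
      · refine Finset.prod_eq_zero (Finset.mem_univ i) ?_
        rw [hD x y hxy]
        exact hq0' xb (y i) (z i) hQ
      · rfl
    · rw [if_neg hxy]
  · rw [if_neg hQ]
    have hF := F1 q hM i a D E hE xb hD
    rw [mul_div_assoc', eq_div_iff hQ, hT]
    linear_combination hF
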